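/- Let p : X → Y be an R-quotient mapping between Tychonoff spaces X and Y. If X is a sequentially Ascoli space, then Y is a sequentially Ascoli space. -/

import Mathlib

open Set Filter Topology

/-- A set `H` of continuous real-valued functions is equicontinuous. -/
def EquicontinuousSet {X : Type*} [TopologicalSpace X] (H : Set C(X, ℝ)) : Prop :=
  ∀ x : X, ∀ ε : ℝ, 0 < ε → ∃ U ∈ 𝓝 x, ∀ x' ∈ U, ∀ f ∈ H, |f x' - f x| < ε

/-- `X` is Ascoli: every compact subset of `C_k(X)` is equicontinuous. -/
def AscoliSpace (X : Type*) [TopologicalSpace X] : Prop :=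
  ∀ K : Set C(X, ℝ), IsCompact K → EquicontinuousSet K

/-- `X` is sequentially Ascoli: every convergent sequence in `C_k(X)` is equicontinuous. -/
def SeqAscoliSpace (X : Type*) [TopologicalSpace X] : Prop :=
  ∀ (f : ℕ → C(X, ℝ)) (g : C(X, ℝ)), Tendsto f atTop (𝓝 g) →
    EquicontinuousSet (Set.range f ∪ {g})

/-- A function is `k`-continuous if its restriction to every compact subset is continuous. -/
def KContinuous {X Y : Type*} [TopologicalSpace X] [TopologicalSpace Y] (f : X → Y) : Prop :=
  ∀ K : Set X, IsCompact K → ContinuousOn f K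

/-- `X` is a `k_ℝ`-space if every `k`-continuous real-valued function is continuous. -/
def KRSpace (X : Type*) [TopologicalSpace X] : Prop :=
  ∀ f : X → ℝ, KContinuous f → Continuous f

/-- `X` is an `s_ℝ`-space if every sequentially continuous real-valued function is continuous. -/
def SRSpace (X : Type*) [TopologicalSpace X] : Prop :=
  ∀ f : X → ℝ, SeqContinuous f → Continuous f

/-- A function on a product is separately continuous. -/
def SeparatelyContinuous {X K : Type*} [TopologicalSpace X] [TopologicalSpace K]
    (Φ : X × K → ℝ) : Prop :=
  (∀ x : X, Continuous fun k => Φ (x, k)) ∧ (∀ k : K, Continuous fun x => Φ (x, k))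

/-- `X` is pseudocompact: every continuous real-valued function on `X` is bounded. -/
def Pseudocompact (X : Type*) [TopologicalSpace X] : Prop :=
  ∀ f : X → ℝ, Continuous f → ∃ M : ℝ, ∀ x : X, |f x| ≤ M

/-- A subset `A` of `X` is functionally bounded if every continuous real-valued
function on `X` is bounded on `A`. -/
def FunctionallyBounded {X : Type*} [TopologicalSpace X] (A : Set X) : Prop :=
  ∀ f : X → ℝ, Continuous f → ∃ M : ℝ, ∀ a ∈ A, |f a| ≤ M

/-- An `R`-quotient map: a continuous surjection such that real-valued functions on the
codomain are continuous as soon as their composition with the map is continuous. -/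
def RQuotientMap {X Y : Type*} [TopologicalSpace X] [TopologicalSpace Y] (p : X → Y) : Prop :=
  Continuous p ∧ Function.Surjective p ∧ ∀ φ : Y → ℝ, Continuous (φ ∘ p) → Continuous φ

lemma abs_iSup_sub_iSup_le {a b : ℕ → ℝ} (ha : BddAbove (Set.range a))
    (hb : BddAbove (Set.range b)) {δ : ℝ} (h : ∀ n, |a n - b n| ≤ δ) :
    |(⨆ n, a n) - ⨆ n, b n| ≤ δ := by
  rw [abs_sub_le_iff]
  constructor
  · rw [sub_le_iff_le_add]
    refine ciSup_le fun n => ?_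
    have h1 : a n - b n ≤ δ := (abs_le.1 (h n)).2
    have h2 := le_ciSup hb n
    linarith
  · rw [sub_le_iff_le_add]
    refine ciSup_le fun n => ?_
    have h1 : -δ ≤ a n - b n := (abs_le.1 (h n)).1
    have h2 := le_ciSup ha n
    linarith

theorem seqAscoli_of_rQuotient {X Y : Type*} [TopologicalSpace X] [T35Space X]
    [TopologicalSpace Y] [T35Space Y] (p : X → Y) (hp : RQuotientMap p)
    (hX : SeqAscoliSpace X) : SeqAscoliSpace Y := by
  obtain ⟨hpc, hpsurj, hpq⟩ := hp
  intro f g hfg y₀ ε hε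
  set pc : C(X, Y) := ⟨p, hpc⟩
  -- pull back the sequence
  have hcomp : Tendsto (fun n => (f n).comp pc) atTop (𝓝 (g.comp pc)) :=
    ((ContinuousMap.continuous_precomp pc).tendsto g).comp hfg
  have hEq := hX (fun n => (f n).comp pc) (g.comp pc) hcomp
  -- combined sequence on Y
  set h : ℕ → C(Y, ℝ) := fun n => Nat.casesOn n g f with hh
  have hmem : ∀ n, (h n).comp pc ∈
      Set.range (fun n => (f n).comp pc) ∪ {g.comp pc} := by
    intro n
    cases n with
    | zero => exact Or.inr rfl
    | succ m => exact Or.inl ⟨m, rfl⟩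
  -- the test function
  set φ : Y → ℝ := fun y' => ⨆ n, min (|h n y' - h n y₀|) ε with hφdef
  have hbdd : ∀ y', BddAbove (Set.range fun n => min (|h n y' - h n y₀|) ε) := by
    intro y'
    exact ⟨ε, fun r ⟨n, hn⟩ => hn ▸ min_le_right _ _⟩
  have hφp : Continuous (φ ∘ p) := by
    rw [continuous_iff_continuousAt]
    intro x₀
    rw [ContinuousAt, Metric.tendsto_nhds]
    intro δ hδ
    obtain ⟨U, hU, hUeq⟩ := hEq x₀ (δ / 2) (by linarith)
    filter_upwards [hU] with x' hx'
    rw [Real.dist_eq]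
    have key : ∀ n, |min (|h n (p x') - h n y₀|) ε - min (|h n (p x₀) - h n y₀|) ε| ≤ δ / 2 := by
      intro n
      have h1 : |h n (p x') - h n (p x₀)| < δ / 2 := by
        have := hUeq x' hx' ((h n).comp pc) (hmem n)
        exact this
      have h2 : |min (|h n (p x') - h n y₀|) ε - min (|h n (p x₀) - h n y₀|) ε|
          ≤ |(|h n (p x') - h n y₀|) - (|h n (p x₀) - h n y₀|)| := by
        have := abs_min_sub_min_le_max (|h n (p x') - h n y₀|) ε (|h n (p x₀) - h n y₀|) ε
        simpa using this
      have h3 : |(|h n (p x') - h n y₀|) - (|h n (p x₀) - h n y₀|)| ≤ |h n (p x') - h n (p x₀)| := by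
        have := abs_abs_sub_abs_le_abs_sub (h n (p x') - h n y₀) (h n (p x₀) - h n y₀)
        simpa using this
      linarith [h2.trans h3]
    have := abs_iSup_sub_iSup_le (hbdd (p x')) (hbdd (p x₀)) key
    calc |φ (p x') - φ (p x₀)| ≤ δ / 2 := this
    _ < δ := by linarith
  have hφ : Continuous φ := hpq φ hφp
  have hφ0 : φ y₀ = 0 := by
    have : ∀ n, min (|h n y₀ - h n y₀|) ε = 0 := by
      intro n; simp [le_of_lt hε]
    simp only [hφdef, this, ciSup_const]
  refine ⟨φ ⁻¹' Set.Iio ε, (isOpen_Iio.preimage hφ).mem_nhds (by simp [hφ0, hε]), ?_⟩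
  intro y' hy' F hF
  have hFh : ∃ n, F = h n := by
    rcases hF with ⟨n, rfl⟩ | hF
    · exact ⟨n + 1, rfl⟩
    · exact ⟨0, hF⟩
  obtain ⟨n, rfl⟩ := hFh
  have hle : min (|h n y' - h n y₀|) ε ≤ φ y' := le_ciSup (hbdd y') n
  have hlt : min (|h n y' - h n y₀|) ε < ε := lt_of_le_of_lt hle hy'
  by_contra hcon
  push_neg at hcon
  rw [min_eq_right hcon] at hlt
  exact lt_irrefl _ hlt
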